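/- Let X be a measurable space, D a probability measure on X, and f, k : X → {0,1} measurable functions. Let D^Y := f_*D and D^Ŷ := k_*D be the pushforward measures on {0,1}. Then d_JS(D^Y, D^Ŷ) ≤ √( E_{x∼D}[|f(x) − k(x)|] ). -/

import Mathlib

open MeasureTheory Real
open scoped ENNReal



/-- The Kullback–Leibler divergence `KL(μ‖ν) = ∫ log(dμ/dν) dμ` (real-valued;
this is the correct value whenever `μ ≪ ν`, as is the case below where the
second argument is the midpoint measure). -/
noncomputable def klReal {Ω : Type*} [MeasurableSpace Ω] (μ ν : Measure Ω) : ℝ :=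
  ∫ x, llr μ ν x ∂μ

/-- The Jensen–Shannon divergence
`D_JS(μ‖ν) := (1/2)·KL(μ‖m) + (1/2)·KL(ν‖m)` with `m := (μ + ν)/2`. -/
noncomputable def jsDiv {Ω : Type*} [MeasurableSpace Ω] (μ ν : Measure Ω) : ℝ :=
  (1 / 2) * klReal μ ((2 : ℝ≥0∞)⁻¹ • (μ + ν)) + (1 / 2) * klReal ν ((2 : ℝ≥0∞)⁻¹ • (μ + ν))

/-- The Jensen–Shannon distance `d_JS(μ,ν) := √(D_JS(μ‖ν))`. -/
noncomputable def jsDist {Ω : Type*} [MeasurableSpace Ω] (μ ν : Measure Ω) : ℝ :=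
  Real.sqrt (jsDiv μ ν)



lemma aux_abs_mul_log_le {t : ℝ} (h0 : 0 ≤ t) (h2 : t ≤ 2) : |t * Real.log t| ≤ 2 := by
  rcases eq_or_lt_of_le h0 with h|h
  · simp [← h]
  rcases le_or_gt t 1 with h1|h1
  · have hlog : Real.log t ≤ 0 := Real.log_nonpos h0 h1
    have hinv : Real.log t⁻¹ ≤ t⁻¹ - 1 := Real.log_le_sub_one_of_pos (by positivity)
    rw [Real.log_inv] at hinv
    have : -(t * Real.log t) ≤ 1 - t := by
      have := mul_le_mul_of_nonneg_left hinv h0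
      rw [mul_sub] at this
      have ht : t * t⁻¹ = 1 := mul_inv_cancel₀ h.ne'
      nlinarith
    rw [abs_of_nonpos (by nlinarith [mul_nonneg h0 (neg_nonneg.mpr hlog)])]
    nlinarith
  · have hlog : Real.log t ≤ t - 1 := Real.log_le_sub_one_of_pos (by linarith)
    have hpos : 0 ≤ Real.log t := Real.log_nonneg h1.le
    rw [abs_of_nonneg (by positivity)]
    nlinarith

lemma aux_mul_log_le {t : ℝ} (h0 : 0 ≤ t) (h2 : t ≤ 2) :
    t * Real.log t ≤ 2 * (if 1 < t then t - 1 else 0) := by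
  split_ifs with h1
  · have hlog : Real.log t ≤ t - 1 := Real.log_le_sub_one_of_pos (by linarith)
    nlinarith
  · push_neg at h1
    have hlog : Real.log t ≤ 0 := Real.log_nonpos h0 h1
    nlinarith [mul_nonneg h0 (neg_nonneg.mpr hlog)]

lemma aux_kl_le {Ω : Type*} [MeasurableSpace Ω] (μ ν : Measure Ω)
    [IsProbabilityMeasure μ] [IsProbabilityMeasure ν] :
    ∃ A : Set Ω, MeasurableSet A ∧
      klReal μ ((2 : ℝ≥0∞)⁻¹ • (μ + ν)) ≤ (μ A).toReal - (ν A).toReal := by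
  set m : Measure Ω := (2 : ℝ≥0∞)⁻¹ • (μ + ν) with hm
  have h2m : (2 : ℝ≥0∞) • m = μ + ν := by
    rw [hm, smul_smul, ENNReal.mul_inv_cancel (by norm_num) (by norm_num), one_smul]
  haveI : IsProbabilityMeasure m := by
    constructor
    simp [hm, Measure.smul_apply, smul_eq_mul]
    exact ENNReal.inv_two_add_inv_two
  have hμm : μ ≪ m := by
    have h1 : μ ≪ μ + ν := Measure.absolutelyContinuous_of_le (Measure.le_add_right le_rfl)
    have h2 : μ + ν ≪ m := by
      rw [hm]; exact Measure.absolutelyContinuous_smul (by norm_num)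
    exact h1.trans h2
  set g : Ω → ℝ := fun x => (μ.rnDeriv m x).toReal with hgdef
  have hg_meas : Measurable g := (Measure.measurable_rnDeriv μ m).ennreal_toReal
  have hg0 : ∀ x, 0 ≤ g x := fun x => ENNReal.toReal_nonneg
  -- g ≤ 2 a.e.
  have hg2 : ∀ᵐ x ∂m, g x ≤ 2 := by
    have hle : μ ≤ (2 : ℝ≥0∞) • m := by rw [h2m]; exact Measure.le_add_right le_rfl
    haveI : SigmaFinite ((2 : ℝ≥0∞) • m) := by rw [h2m]; infer_instance
    have h1 : μ.rnDeriv ((2 : ℝ≥0∞) • m) ≤ᵐ[(2 : ℝ≥0∞) • m] 1 :=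
      Measure.rnDeriv_le_one_of_le hle
    have h1' : μ.rnDeriv ((2 : ℝ≥0∞) • m) ≤ᵐ[m] 1 := by
      have hmac : m ≪ (2 : ℝ≥0∞) • m := Measure.absolutelyContinuous_smul (by norm_num)
      exact hmac.ae_le h1
    have h2 : μ.rnDeriv ((2 : ℝ≥0∞) • m) =ᵐ[m] (2 : ℝ≥0∞)⁻¹ • μ.rnDeriv m :=
      Measure.rnDeriv_smul_right_of_ne_top μ m (by norm_num) (by norm_num)
    filter_upwards [h1', h2] with x hx1 hx2
    rw [hx2] at hx1
    simp only [Pi.smul_apply, Pi.one_apply, smul_eq_mul] at hx1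
    have : μ.rnDeriv m x ≤ 2 := by
      have := mul_le_mul' (le_refl (2 : ℝ≥0∞)) hx1
      rwa [← mul_assoc, ENNReal.mul_inv_cancel (by norm_num) (by norm_num), one_mul,
        mul_one] at this
    calc g x ≤ ((2 : ℝ≥0∞)).toReal := ENNReal.toReal_mono (by norm_num) this
    _ = 2 := by norm_num
  set A : Set Ω := {x | 1 < g x} with hA
  have hA_meas : MeasurableSet A := measurableSet_lt measurable_const hg_meas
  refine ⟨A, hA_meas, ?_⟩
  have h_int_eq : klReal μ m = ∫ x, g x • llr μ m x ∂m :=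
    (integral_rnDeriv_smul hμm).symm
  set b : Ω → ℝ := fun x => 2 * (if 1 < g x then g x - 1 else 0) with hb
  have hb_meas : Measurable b :=
    (Measurable.ite (measurableSet_lt measurable_const hg_meas)
      (hg_meas.sub measurable_const) measurable_const).const_mul 2
  have h_ptwise : ∀ᵐ x ∂m, g x • llr μ m x ≤ b x := by
    filter_upwards [hg2] with x hx
    have : g x • llr μ m x = g x * Real.log (g x) := rfl
    rw [this]
    exact aux_mul_log_le (hg0 x) hx
  have hint1 : Integrable (fun x => g x • llr μ m x) m := by
    refine Integrable.mono' (integrable_const 2)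
      ((hg_meas.mul (measurable_llr μ m)).aestronglyMeasurable) ?_
    filter_upwards [hg2] with x hx
    have : g x • llr μ m x = g x * Real.log (g x) := rfl
    rw [this]
    exact aux_abs_mul_log_le (hg0 x) hx
  have hint2 : Integrable b m := by
    refine Integrable.mono' (integrable_const 2) hb_meas.aestronglyMeasurable ?_
    filter_upwards [hg2] with x hx
    rw [Real.norm_eq_abs, abs_mul, abs_two]
    split_ifs with h1
    · rw [abs_of_nonneg (by linarith)]; nlinarith
    · simp
  have h_le : klReal μ m ≤ ∫ x, b x ∂m := by
    rw [h_int_eq]; exact integral_mono_ae hint1 hint2 h_ptwise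
  have hbind : ∀ x, b x = 2 * A.indicator (fun y => g y - 1) x := by
    intro x
    simp only [hb, Set.indicator_apply]
    by_cases h : 1 < g x
    · rw [if_pos h, if_pos (show x ∈ A from h)]
    · rw [if_neg h, if_neg (show x ∉ A from h)]
  have hgint : Integrable g m := Measure.integrable_toReal_rnDeriv
  have hIb : ∫ x, b x ∂m = 2 * ((μ A).toReal - (m A).toReal) := by
    simp only [hbind]
    rw [integral_const_mul, integral_indicator hA_meas]
    congr 1
    rw [integral_sub hgint.integrableOn (integrable_const 1).integrableOn]
    rw [Measure.setIntegral_toReal_rnDeriv hμm A]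
    simp [measureReal_def]
  have hmA : (m A).toReal = ((μ A).toReal + (ν A).toReal) / 2 := by
    rw [hm]
    simp only [Measure.smul_apply, Measure.add_apply, smul_eq_mul, ENNReal.toReal_mul,
      ENNReal.toReal_add (measure_ne_top μ A) (measure_ne_top ν A), ENNReal.toReal_inv]
    norm_num
    ring
  rw [hIb, hmA] at h_le
  linarith

theorem stmt_8 {X : Type*} [MeasurableSpace X]
    (D : Measure X) [IsProbabilityMeasure D]
    (f k : X → ℝ) (hf : Measurable f) (hk : Measurable k)
    (hfr : ∀ x, f x = 0 ∨ f x = 1) (hkr : ∀ x, k x = 0 ∨ k x = 1) :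
    jsDist (Measure.map f D) (Measure.map k D) ≤
      Real.sqrt (∫ x, |f x - k x| ∂D) := by
  set μ : Measure ℝ := Measure.map f D with hμ
  set ν : Measure ℝ := Measure.map k D with hν
  haveI : IsProbabilityMeasure μ := Measure.isProbabilityMeasure_map hf.aemeasurable
  haveI : IsProbabilityMeasure ν := Measure.isProbabilityMeasure_map hk.aemeasurable
  set E : Set X := {x | f x ≠ k x} with hE
  have hE_meas : MeasurableSet E := (measurableSet_eq_fun hf hk).compl
  set c : ℝ := (D E).toReal with hc
  have hdiff : ∀ A : Set ℝ, MeasurableSet A → (μ A).toReal - (ν A).toReal ≤ c := by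
    intro A hA
    rw [hμ, hν, Measure.map_apply hf hA, Measure.map_apply hk hA]
    have hsub : f ⁻¹' A ⊆ k ⁻¹' A ∪ E := by
      intro x hx
      by_cases hxe : f x = k x
      · left
        simpa [Set.mem_preimage, ← hxe] using hx
      · right
        exact hxe
    have hle : D (f ⁻¹' A) ≤ D (k ⁻¹' A) + D E :=
      (measure_mono hsub).trans (measure_union_le _ _)
    have h1 : (D (f ⁻¹' A)).toReal ≤ (D (k ⁻¹' A)).toReal + (D E).toReal := by
      rw [← ENNReal.toReal_add (measure_ne_top _ _) (measure_ne_top _ _)]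
      exact ENNReal.toReal_mono (by finiteness) hle
    linarith
  have hdiff' : ∀ A : Set ℝ, MeasurableSet A → (ν A).toReal - (μ A).toReal ≤ c := by
    intro A hA
    rw [hμ, hν, Measure.map_apply hf hA, Measure.map_apply hk hA]
    have hsub : k ⁻¹' A ⊆ f ⁻¹' A ∪ E := by
      intro x hx
      by_cases hxe : f x = k x
      · left
        simpa [Set.mem_preimage, hxe] using hx
      · right
        exact hxe
    have hle : D (k ⁻¹' A) ≤ D (f ⁻¹' A) + D E :=
      (measure_mono hsub).trans (measure_union_le _ _)
    have h1 : (D (k ⁻¹' A)).toReal ≤ (D (f ⁻¹' A)).toReal + (D E).toReal := by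
      rw [← ENNReal.toReal_add (measure_ne_top _ _) (measure_ne_top _ _)]
      exact ENNReal.toReal_mono (by finiteness) hle
    linarith
  obtain ⟨A, hAm, hA⟩ := aux_kl_le μ ν
  obtain ⟨B, hBm, hB⟩ := aux_kl_le ν μ
  rw [show (2 : ℝ≥0∞)⁻¹ • (ν + μ) = (2 : ℝ≥0∞)⁻¹ • (μ + ν) by rw [add_comm]] at hB
  have hjs : jsDiv μ ν ≤ c := by
    rw [jsDiv]
    have h1 : klReal μ ((2 : ℝ≥0∞)⁻¹ • (μ + ν)) ≤ c := hA.trans (hdiff A hAm)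
    have h2 : klReal ν ((2 : ℝ≥0∞)⁻¹ • (μ + ν)) ≤ c := hB.trans (hdiff' B hBm)
    linarith
  have hint : ∫ x, |f x - k x| ∂D = c := by
    have heq : (fun x => |f x - k x|) = E.indicator (fun _ => (1 : ℝ)) := by
      funext x
      by_cases hx : f x = k x
      · rw [Set.indicator_of_notMem (by simp [hE, hx] : x ∉ E), hx]
        simp
      · rw [Set.indicator_of_mem (show x ∈ E from hx)]
        rcases hfr x with h | h <;> rcases hkr x with h' | h'
        · exact absurd (h.trans h'.symm) hx
        · rw [h, h']; norm_num
        · rw [h, h']; norm_num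
        · exact absurd (h.trans h'.symm) hx
    rw [heq, integral_indicator hE_meas]
    simp [hc, measureReal_def]
  rw [jsDist]
  apply Real.sqrt_le_sqrt
  rw [hint]
  exact hjs
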